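/- If F is a fiber of type II* of a rational elliptic surface arising from a Halphen pencil of index m, then the largest multiplicity M_B of a component of the corresponding plane curve B satisfies M_B ≥ 3. -/
import Mathlib


/-- Dual graph of a Kodaira fiber of type `II*`: the affine Dynkin diagram `Ẽ₈`,
a chain `0 — 1 — ⋯ — 7` with an extra vertex `8` attached to vertex `5`. -/
def e8Graph : SimpleGraph (Fin 9) :=
  SimpleGraph.fromRel (fun i j => (j.val = i.val + 1 ∧ j.val ≤ 7) ∨ (i.val = 5 ∧ j.val = 8))

/-- Component multiplicities of a fiber of type `II*`. -/
def e8Mult : Fin 9 → ℕ := ![1, 2, 3, 4, 5, 6, 4, 2, 3]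

/-- Dual graph of a Kodaira fiber of type `III*`: the affine Dynkin diagram `Ẽ₇`,
a chain `0 — 1 — ⋯ — 6` with an extra vertex `7` attached to the middle vertex `3`. -/
def e7Graph : SimpleGraph (Fin 8) :=
  SimpleGraph.fromRel (fun i j => (j.val = i.val + 1 ∧ j.val ≤ 6) ∨ (i.val = 3 ∧ j.val = 7))

/-- Component multiplicities of a fiber of type `III*`. -/
def e7Mult : Fin 8 → ℕ := ![1, 2, 3, 4, 3, 2, 1, 2]

/-- Dual graph of a Kodaira fiber of type `IV*`: the affine Dynkin diagram `Ẽ₆`,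
a central vertex `0` with three arms `0 — 1 — 2`, `0 — 3 — 4`, `0 — 5 — 6`. -/
def e6Graph : SimpleGraph (Fin 7) :=
  SimpleGraph.fromRel (fun i j =>
    (i.val = 0 ∧ j.val = 1) ∨ (i.val = 1 ∧ j.val = 2) ∨
    (i.val = 0 ∧ j.val = 3) ∨ (i.val = 3 ∧ j.val = 4) ∨
    (i.val = 0 ∧ j.val = 5) ∨ (i.val = 5 ∧ j.val = 6))

/-- Component multiplicities of a fiber of type `IV*`. -/
def e6Mult : Fin 7 → ℕ := ![3, 2, 1, 2, 1, 2, 1]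

/-- Proposition (mult3): if the fiber `F` is of type `II*` (weighted dual graph `Ẽ₈`),
then — the exceptional (black) components lying in disjoint chains, so every black node has
at most two black neighbors — the largest multiplicity `M_B` of a component of the
corresponding plane curve `B` is at least three: some blue component has multiplicity ≥ 3. -/
theorem curve_multiplicity_at_least_three_for_iistar
    {V : Type*} (G : SimpleGraph V) (mult : V → ℕ) (blue : V → Prop)
    (hblack : ∀ v, ¬ blue v → {u | ¬ blue u ∧ G.Adj v u}.ncard ≤ 2)
    (htype : ∃ e : G ≃g e8Graph, ∀ v, mult v = e8Mult (e v)) :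
    ∃ v, blue v ∧ 3 ≤ mult v := by
  obtain ⟨e, hm⟩ := htype
  by_contra hcon
  push_neg at hcon
  have hb : ∀ i : Fin 9, 3 ≤ e8Mult i → ¬ blue (e.symm i) := by
    intro i hi hbl
    have := hcon _ hbl
    rw [hm, e.apply_symm_apply] at this
    omega
  have h4 := hb 4 (by decide)
  have h5 := hb 5 (by decide)
  have h6 := hb 6 (by decide)
  have h8 := hb 8 (by decide)
  have hadj : ∀ i j : Fin 9, e8Graph.Adj i j → G.Adj (e.symm i) (e.symm j) := by
    intro i j hij
    exact e.symm.map_adj_iff.mpr hij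
  have hsub : ({e.symm 4, e.symm 6, e.symm 8} : Set V) ⊆
      {u | ¬ blue u ∧ G.Adj (e.symm 5) u} := by
    intro u hu
    rcases hu with rfl | rfl | rfl
    · exact ⟨h4, hadj 5 4 (by rw [e8Graph, SimpleGraph.fromRel_adj]; decide)⟩
    · exact ⟨h6, hadj 5 6 (by rw [e8Graph, SimpleGraph.fromRel_adj]; decide)⟩
    · exact ⟨h8, hadj 5 8 (by rw [e8Graph, SimpleGraph.fromRel_adj]; decide)⟩
  have hinj := e.toEquiv.symm.injective
  have hcard : ({e.symm 4, e.symm 6, e.symm 8} : Set V).ncard = 3 := by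
    rw [Set.ncard_insert_of_notMem, Set.ncard_insert_of_notMem, Set.ncard_singleton]
    · simp only [Set.mem_singleton_iff]
      exact hinj.ne (by decide)
    · simp only [Set.mem_insert_iff, Set.mem_singleton_iff]
      push_neg
      exact ⟨hinj.ne (by decide), hinj.ne (by decide)⟩
  haveI : Fintype V := Fintype.ofEquiv _ e.toEquiv.symm
  have hle := Set.ncard_le_ncard hsub (Set.toFinite _)
  have := hblack (e.symm 5) h5
  omega
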